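/- For any κ ≥ 1 and any E ≥ 0, the function x ↦ g((κ−1)·(g⁻¹(x)+1) + κ·E) is increasing and convex on [0,∞). -/

import Mathlib

open Real Set Filter

noncomputable def g (E : ℝ) : ℝ := (E + 1) * Real.log (E + 1) - E * Real.log E

noncomputable def ginv : ℝ → ℝ := Function.invFunOn g (Set.Ici 0)

/-! Auxiliary lemmas -/

noncomputable def Lfun (t : ℝ) : ℝ := Real.log (t + 1) - Real.log t

lemma Lfun_pos {t : ℝ} (ht : 0 < t) : 0 < Lfun t :=
  sub_pos.2 (Real.log_lt_log ht (by linarith))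

lemma g_zero : g 0 = 0 := by simp [g]

lemma g_cont : Continuous g := by
  have h1 : Continuous fun E : ℝ => (E + 1) * Real.log (E + 1) :=
    Real.continuous_mul_log.comp (continuous_id.add continuous_const)
  exact h1.sub Real.continuous_mul_log

lemma hasDerivAt_g {t : ℝ} (ht : 0 < t) : HasDerivAt g (Lfun t) t := by
  have h1t : (t + 1) ≠ 0 := by linarith
  have hinner : HasDerivAt (fun x : ℝ => x + 1) 1 t := (hasDerivAt_id t).add_const 1
  have hlog1 : HasDerivAt (fun x : ℝ => Real.log (x + 1)) ((t + 1)⁻¹ * 1) t := by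
    have := (Real.hasDerivAt_log h1t).comp t hinner; exact this
  have h1 : HasDerivAt (fun x : ℝ => (x + 1) * Real.log (x + 1))
      (1 * Real.log (t + 1) + (t + 1) * ((t + 1)⁻¹ * 1)) t := hinner.mul hlog1
  have h2 : HasDerivAt (fun x : ℝ => x * Real.log x) (1 * Real.log t + t * t⁻¹) t :=
    (hasDerivAt_id t).mul (Real.hasDerivAt_log (ne_of_gt ht))
  have := h1.sub h2
  have heq : 1 * Real.log (t + 1) + (t + 1) * ((t + 1)⁻¹ * 1) -
      (1 * Real.log t + t * t⁻¹) = Lfun t := by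
    field_simp [Lfun]
    unfold Lfun; ring
  rw [heq] at this
  exact this

lemma g_strictMono : StrictMonoOn g (Set.Ici 0) := by
  apply strictMonoOn_of_deriv_pos (convex_Ici 0) g_cont.continuousOn
  intro x hx
  rw [interior_Ici] at hx
  rw [(hasDerivAt_g hx).deriv]
  exact Lfun_pos hx

lemma g_nonneg {t : ℝ} (ht : 0 ≤ t) : 0 ≤ g t := by
  rcases eq_or_lt_of_le ht with h | h
  · rw [← h, g_zero]
  · have := g_strictMono (Set.self_mem_Ici) (le_of_lt h) h
    rw [g_zero] at this; exact le_of_lt this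

lemma log_le_g {t : ℝ} (ht : 0 ≤ t) : Real.log (t + 1) ≤ g t := by
  have hlog : Real.log t ≤ Real.log (t + 1) := by
    rcases eq_or_lt_of_le ht with h | h
    · simp [← h]
    · exact le_of_lt (Real.log_lt_log h (by linarith))
  have : 0 ≤ t * (Real.log (t + 1) - Real.log t) :=
    mul_nonneg ht (sub_nonneg.2 hlog)
  unfold g; nlinarith

lemma g_surj {y : ℝ} (hy : 0 ≤ y) : ∃ t ∈ Set.Ici (0 : ℝ), g t = y := by
  set T := Real.exp y - 1 with hT
  have hT0 : 0 ≤ T := by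
    have := Real.one_le_exp hy
    simp [hT]; linarith
  have hgT : y ≤ g T := by
    have := log_le_g hT0
    rw [hT] at this
    simpa [Real.log_exp] using this
  have := intermediate_value_Icc hT0 g_cont.continuousOn
  have hmem : y ∈ Set.Icc (g 0) (g T) := by
    rw [g_zero]; exact ⟨hy, hgT⟩
  obtain ⟨t, ht, hgt⟩ := this hmem
  exact ⟨t, ht.1, hgt⟩

lemma ginv_mem {x : ℝ} (hx : 0 ≤ x) : ginv x ∈ Set.Ici (0 : ℝ) :=
  Function.invFunOn_mem (g_surj hx)

lemma ginv_nonneg {x : ℝ} (hx : 0 ≤ x) : 0 ≤ ginv x := ginv_mem hx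

lemma g_ginv {x : ℝ} (hx : 0 ≤ x) : g (ginv x) = x :=
  Function.invFunOn_eq (g_surj hx)

lemma ginv_g {t : ℝ} (ht : 0 ≤ t) : ginv (g t) = t :=
  g_strictMono.injOn.leftInvOn_invFunOn ht

lemma ginv_zero : ginv 0 = 0 := by
  have := ginv_g (le_refl (0 : ℝ))
  rwa [g_zero] at this

lemma ginv_monotone : MonotoneOn ginv (Set.Ici 0) := by
  intro x hx y hy hxy
  by_contra h
  push_neg at h
  have := g_strictMono (ginv_mem hy) (ginv_mem hx) h
  rw [g_ginv hx, g_ginv hy] at this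
  linarith

lemma ginv_pos {x : ℝ} (hx : 0 < x) : 0 < ginv x := by
  rcases eq_or_lt_of_le (ginv_nonneg (le_of_lt hx)) with h | h
  · exfalso
    have := g_ginv (le_of_lt hx)
    rw [← h, g_zero] at this
    linarith
  · exact h

lemma ginv_image : ginv '' Set.Ici 0 = Set.Ici (0 : ℝ) := by
  apply Set.Subset.antisymm
  · rintro _ ⟨x, hx, rfl⟩; exact ginv_mem hx
  · intro t ht
    exact ⟨g t, g_nonneg ht, ginv_g ht⟩

lemma ginv_continuousOn : ContinuousOn ginv (Set.Ici 0) := by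
  intro x hx
  rcases eq_or_lt_of_le (Set.mem_Ici.mp hx) with h | h
  · rw [← h]
    have hs : Set.Ici (0:ℝ) ∈ nhdsWithin (0:ℝ) (Set.Ici 0) := self_mem_nhdsWithin
    have hfs : ginv '' Set.Ici 0 ∈ nhdsWithin (ginv 0) (Set.Ici (ginv 0)) := by
      rw [ginv_image, ginv_zero]
      exact self_mem_nhdsWithin
    exact continuousWithinAt_right_of_monotoneOn_of_image_mem_nhdsWithin
      ginv_monotone hs hfs
  · exact (continuousAt_of_monotoneOn_of_image_mem_nhds ginv_monotone
      (Ici_mem_nhds h) (by rw [ginv_image]; exact Ici_mem_nhds (ginv_pos h))).continuousWithinAt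

lemma ginv_continuousAt {x : ℝ} (hx : 0 < x) : ContinuousAt ginv x :=
  ginv_continuousOn.continuousAt (Ici_mem_nhds hx)

lemma hasDerivAt_ginv {x : ℝ} (hx : 0 < x) : HasDerivAt ginv (Lfun (ginv x))⁻¹ x := by
  have ht : 0 < ginv x := ginv_pos hx
  have hf : HasDerivAt g (Lfun (ginv x)) (ginv x) := hasDerivAt_g ht
  have hfg : ∀ᶠ y in nhds x, g (ginv y) = y := by
    filter_upwards [isOpen_Ioi.mem_nhds hx] with y hy
    exact g_ginv (le_of_lt hy)
  exact hf.of_local_left_inverse (ginv_continuousAt hx) (ne_of_gt (Lfun_pos ht)) hfg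

/-- key inequality: `t * L t ≤ 1` -/
lemma mul_Lfun_le_one {t : ℝ} (ht : 0 < t) : t * Lfun t ≤ 1 := by
  have h : Real.log ((t + 1) / t) ≤ (t + 1) / t - 1 :=
    Real.log_le_sub_one_of_pos (by positivity)
  rw [Real.log_div (by linarith) (ne_of_gt ht)] at h
  have h2 : (t + 1) / t - 1 = 1 / t := by field_simp; ring
  rw [h2] at h
  have := mul_le_mul_of_nonneg_left h (le_of_lt ht)
  calc t * Lfun t = t * (Real.log (t + 1) - Real.log t) := rfl
    _ ≤ t * (1 / t) := this
    _ = 1 := by field_simp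

/-- key inequality: `1 ≤ (s+1) * L s` -/
lemma one_le_mul_Lfun {s : ℝ} (hs : 0 < s) : 1 ≤ (s + 1) * Lfun s := by
  have h : Real.log (s / (s + 1)) ≤ s / (s + 1) - 1 :=
    Real.log_le_sub_one_of_pos (by positivity)
  rw [Real.log_div (ne_of_gt hs) (by linarith)] at h
  have h2 : s / (s + 1) - 1 = -(1 / (s + 1)) := by field_simp; ring
  rw [h2] at h
  have h3 : 1 / (s + 1) ≤ Real.log (s + 1) - Real.log s := by linarith
  have := mul_le_mul_of_nonneg_left h3 (by linarith : (0:ℝ) ≤ s + 1)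
  calc (1:ℝ) = (s + 1) * (1 / (s + 1)) := by field_simp
    _ ≤ (s + 1) * (Real.log (s + 1) - Real.log s) := this
    _ = (s + 1) * Lfun s := rfl

/-- The central inequality `a·Φ(t) ≤ Φ(a(t+1)+c)` where `Φ(u) = u(u+1)L(u)`. -/
lemma phi_ineq {a c t : ℝ} (ha : 0 < a) (hc : 0 ≤ c) (ht : 0 < t) :
    a * (t * (t + 1) * Lfun t) ≤ (a * (t + 1) + c) * ((a * (t + 1) + c) + 1) *
      Lfun (a * (t + 1) + c) := by
  obtain ⟨s, hsdef⟩ : ∃ s, s = a * (t + 1) + c := ⟨_, rfl⟩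
  rw [← hsdef]
  have hspos : 0 < s := by rw [hsdef]; nlinarith
  have h2 : t * Lfun t ≤ 1 := mul_Lfun_le_one ht
  have h5 : 1 ≤ (s + 1) * Lfun s := one_le_mul_Lfun hspos
  have A : a * (t + 1) * (t * Lfun t) ≤ a * (t + 1) * 1 :=
    mul_le_mul_of_nonneg_left h2 (by nlinarith)
  have B : a * (t + 1) ≤ s := by rw [hsdef]; nlinarith
  have C : s * 1 ≤ s * ((s + 1) * Lfun s) := mul_le_mul_of_nonneg_left h5 hspos.le
  calc a * (t * (t + 1) * Lfun t) = a * (t + 1) * (t * Lfun t) := by ring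
    _ ≤ a * (t + 1) * 1 := A
    _ = a * (t + 1) := by ring
    _ ≤ s := B
    _ = s * 1 := by ring
    _ ≤ s * ((s + 1) * Lfun s) := C
    _ = s * (s + 1) * Lfun s := by ring

/-- Derivative of `Lfun` composed with the affine map. -/
lemma hasDerivAt_Lfun {t : ℝ} (ht : 0 < t) :
    HasDerivAt Lfun ((t + 1)⁻¹ - t⁻¹) t := by
  have hinner : HasDerivAt (fun x : ℝ => x + 1) 1 t := (hasDerivAt_id t).add_const 1
  have h1 : HasDerivAt (fun x : ℝ => Real.log (x + 1)) ((t + 1)⁻¹ * 1) t :=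
    (Real.hasDerivAt_log (by linarith)).comp t hinner
  have h2 : HasDerivAt Real.log t⁻¹ t := Real.hasDerivAt_log (ne_of_gt ht)
  have := h1.sub h2
  rw [mul_one] at this; exact this

/-- The derivative function `D t = L(a(t+1)+c) · (a / L t)` and its monotonicity. -/
lemma D_hasDerivAt {a c t : ℝ} (ha : 0 < a) (hc : 0 ≤ c) (ht : 0 < t) :
    HasDerivAt (fun t => Lfun (a * (t + 1) + c) * (a * (Lfun t)⁻¹))
      ((((a * (t + 1) + c) + 1)⁻¹ - (a * (t + 1) + c)⁻¹) * a * (a * (Lfun t)⁻¹) +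
        Lfun (a * (t + 1) + c) * (a * (-((t + 1)⁻¹ - t⁻¹) / (Lfun t) ^ 2))) t := by
  set s := a * (t + 1) + c with hs
  have hspos : 0 < s := by nlinarith
  have haff : HasDerivAt (fun x : ℝ => a * (x + 1) + c) a t := by
    have : HasDerivAt (fun x : ℝ => a * (x + 1) + c) (a * 1) t :=
      ((((hasDerivAt_id t).add_const 1).const_mul a).add_const c)
    simpa using this
  have hu : HasDerivAt (fun x : ℝ => Lfun (a * (x + 1) + c)) (((s + 1)⁻¹ - s⁻¹) * a) t := by
    have := (hasDerivAt_Lfun hspos).comp t haff; exact this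
  have hL : HasDerivAt Lfun ((t + 1)⁻¹ - t⁻¹) t := hasDerivAt_Lfun ht
  have hLne : Lfun t ≠ 0 := ne_of_gt (Lfun_pos ht)
  have hv : HasDerivAt (fun x : ℝ => a * (Lfun x)⁻¹)
      (a * (-((t + 1)⁻¹ - t⁻¹) / (Lfun t) ^ 2)) t :=
    (hL.inv hLne).const_mul a
  exact hu.mul hv

lemma D_monotone {a c : ℝ} (ha : 0 < a) (hc : 0 ≤ c) :
    MonotoneOn (fun t => Lfun (a * (t + 1) + c) * (a * (Lfun t)⁻¹)) (Set.Ioi 0) := by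
  apply monotoneOn_of_deriv_nonneg (convex_Ioi 0)
  · intro t ht
    exact ((D_hasDerivAt ha hc ht).continuousAt).continuousWithinAt
  · rw [interior_Ioi]
    intro t ht
    exact (D_hasDerivAt ha hc ht).differentiableAt.differentiableWithinAt
  · rw [interior_Ioi]
    intro t ht
    rw [(D_hasDerivAt ha hc ht).deriv]
    have ht' : (0:ℝ) < t := ht
    have key := phi_ineq ha hc ht'
    obtain ⟨s, hsdef⟩ : ∃ s, s = a * (t + 1) + c := ⟨_, rfl⟩
    rw [← hsdef] at key ⊢
    have hspos : 0 < s := by rw [hsdef]; nlinarith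
    have hLt := Lfun_pos ht'
    have hLs := Lfun_pos hspos
    obtain ⟨lt, hlt⟩ : ∃ l, l = Lfun t := ⟨_, rfl⟩
    obtain ⟨ls, hls⟩ : ∃ l, l = Lfun s := ⟨_, rfl⟩
    rw [← hlt, ← hls] at key ⊢
    rw [← hlt] at hLt
    rw [← hls] at hLs
    have hs0 : s ≠ 0 := ne_of_gt hspos
    have hs1 : s + 1 ≠ 0 := by linarith
    have ht0 : t ≠ 0 := ne_of_gt ht'
    have ht1 : t + 1 ≠ 0 := by linarith
    have hlt0 : lt ≠ 0 := ne_of_gt hLt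
    have hid : ((s + 1)⁻¹ - s⁻¹) * a * (a * lt⁻¹) + ls * (a * (-((t + 1)⁻¹ - t⁻¹) / lt ^ 2)) =
        a * (s * (s + 1) * ls - a * (t * (t + 1) * lt)) / (s * (s + 1) * (t * (t + 1)) * lt ^ 2) := by
      field_simp
      ring
    rw [hid]
    apply div_nonneg
    · apply mul_nonneg (le_of_lt ha)
      linarith
    · have : 0 < s * (s + 1) * (t * (t + 1)) * lt ^ 2 := by positivity
      linarith

theorem contravariant_thermal_entropy_monotone_convex (κ E : ℝ) (hκ : 1 ≤ κ) (hE : 0 ≤ E) :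
    MonotoneOn (fun x => g ((κ - 1) * (ginv x + 1) + κ * E)) (Set.Ici 0) ∧
      ConvexOn ℝ (Set.Ici 0) (fun x => g ((κ - 1) * (ginv x + 1) + κ * E)) := by
  have ha0 : 0 ≤ κ - 1 := by linarith
  have hc0 : 0 ≤ κ * E := mul_nonneg (by linarith) hE
  -- Monotone part (works in general)
  have hmono : MonotoneOn (fun x => g ((κ - 1) * (ginv x + 1) + κ * E)) (Set.Ici 0) := by
    intro x hx y hy hxy
    have ht := ginv_monotone hx hy hxy
    have htx := ginv_nonneg hx
    have hty := ginv_nonneg hy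
    have hsx : (0:ℝ) ≤ (κ - 1) * (ginv x + 1) + κ * E := by nlinarith
    have hsy : (0:ℝ) ≤ (κ - 1) * (ginv y + 1) + κ * E := by nlinarith
    have hle : (κ - 1) * (ginv x + 1) + κ * E ≤ (κ - 1) * (ginv y + 1) + κ * E := by nlinarith
    exact g_strictMono.monotoneOn hsx hsy hle
  refine ⟨hmono, ?_⟩
  -- Convex part
  rcases eq_or_lt_of_le hκ with hκ1 | hκ1
  · -- κ = 1 : constant function
    have : (fun x => g ((κ - 1) * (ginv x + 1) + κ * E)) = fun _ => g (κ * E) := by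
      funext x
      rw [← hκ1]
      norm_num
    rw [this]
    exact convexOn_const _ (convex_Ici 0)
  · have ha : 0 < κ - 1 := by linarith
    -- derivative of F at x > 0
    have hF : ∀ x : ℝ, 0 < x →
        HasDerivAt (fun x => g ((κ - 1) * (ginv x + 1) + κ * E))
          (Lfun ((κ - 1) * (ginv x + 1) + κ * E) * ((κ - 1) * (Lfun (ginv x))⁻¹)) x := by
      intro x hx
      have ht := ginv_pos hx
      have hspos : 0 < (κ - 1) * (ginv x + 1) + κ * E := by nlinarith
      have hinner : HasDerivAt (fun x => (κ - 1) * (ginv x + 1) + κ * E)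
          ((κ - 1) * (Lfun (ginv x))⁻¹) x := by
        have := (((hasDerivAt_ginv hx).add_const 1).const_mul (κ - 1)).add_const (κ * E)
        exact this
      exact (hasDerivAt_g hspos).comp x hinner
    apply MonotoneOn.convexOn_of_deriv (convex_Ici 0)
    · -- continuity on Ici 0
      have hinner : ContinuousOn (fun x => (κ - 1) * (ginv x + 1) + κ * E) (Set.Ici 0) :=
        (continuousOn_const.mul (ginv_continuousOn.add continuousOn_const)).add
          continuousOn_const
      exact g_cont.comp_continuousOn hinner
    · rw [interior_Ici]
      intro x hx
      exact (hF x hx).differentiableAt.differentiableWithinAt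
    · rw [interior_Ici]
      intro x hx y hy hxy
      rw [(hF x hx).deriv, (hF y hy).deriv]
      have hgx := ginv_pos hx
      have hgy := ginv_pos hy
      have hgle := ginv_monotone (Set.mem_Ici.2 (le_of_lt hx)) (Set.mem_Ici.2 (le_of_lt hy)) hxy
      have := D_monotone ha hc0 (Set.mem_Ioi.2 hgx) (Set.mem_Ioi.2 hgy) hgle
      simp only at this
      calc Lfun ((κ - 1) * (ginv x + 1) + κ * E) * ((κ - 1) * (Lfun (ginv x))⁻¹)
          = Lfun ((κ - 1) * (ginv x + 1) + κ * E) * ((κ - 1) * (Lfun (ginv x))⁻¹) := rfl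
        _ ≤ _ := by
            have h1 : (κ - 1) * (ginv x + 1) + κ * E = (κ - 1) * (ginv x + 1) + κ * E := rfl
            convert this using 2 <;> ring
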